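/- For real constants m, x₀ > 0, a point [X:Y:Z:U] ∈ ℙ³(ℝ) satisfies the three equations Z² − U² + x₀·X·U = 0, X·U − m·Y·Z = 0, and X·Z + m·Y·(x₀·X − U) = 0 if and only if it lies in the image of the map ℙ¹(ℝ) → ℙ³(ℝ) induced by Γ̃(s,t) = (m·s·(t²−s²), t·(t²−s²), m·x₀·s²·t, m·x₀·s·t²). In other words, the real projective zero locus of these three quadrics is exactly the twisted cubic parametrized by Γ̃. -/

import Mathlib

/-- The homogenized twisted cubic parametrization as a vector in `ℝ⁴`. -/
def gammaTilde (m x₀ s t : ℝ) : Fin 4 → ℝ :=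
  ![m * s * (t ^ 2 - s ^ 2), t * (t ^ 2 - s ^ 2), m * x₀ * s ^ 2 * t, m * x₀ * s * t ^ 2]

/-- a point `[X:Y:Z:U] ∈ ℙ³(ℝ)` (given by a nonzero representative
vector `v`) satisfies the three quadratic equations iff it lies in the image of the
map `ℙ¹(ℝ) → ℙ³(ℝ)` induced by `Γ̃`, i.e. iff `v` is a nonzero scalar multiple of
`Γ̃(s,t)` for some `(s,t) ≠ (0,0)`. -/
theorem twisted_cubic_is_zero_locus (m x₀ : ℝ) (hm : 0 < m) (hx₀ : 0 < x₀)
    (v : Fin 4 → ℝ) (hv : v ≠ 0) :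
    ((v 2) ^ 2 - (v 3) ^ 2 + x₀ * v 0 * v 3 = 0 ∧
     v 0 * v 3 - m * v 1 * v 2 = 0 ∧
     v 0 * v 2 + m * v 1 * (x₀ * v 0 - v 3) = 0)
    ↔ ∃ s t c : ℝ, (s, t) ≠ (0, 0) ∧ c ≠ 0 ∧ v = c • gammaTilde m x₀ s t := by
  have hm0 : m ≠ 0 := hm.ne'
  have hx0 : x₀ ≠ 0 := hx₀.ne'
  constructor
  · rintro ⟨e1, e2, e3⟩
    by_cases hU : v 3 = 0
    · have hZ : v 2 = 0 := by
        have : (v 2) ^ 2 = 0 := by linear_combination e1 + (v 3 - x₀ * v 0) * hU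
        exact pow_eq_zero_iff (n := 2) (by norm_num) |>.mp this
      by_cases hX : v 0 = 0
      · have hY : v 1 ≠ 0 := by
          intro hY
          apply hv
          funext i
          fin_cases i <;> simp_all
        refine ⟨0, 1, v 1, by simp, hY, ?_⟩
        funext i
        fin_cases i <;> simp [gammaTilde, hX, hZ, hU]
      · have hY : v 1 = 0 := by
          have h : m * x₀ * (v 0 * v 1) = 0 := by linear_combination e3 - v 0 * hZ + m * v 1 * hU
          have := mul_eq_zero.mp h
          rcases this with h' | h'
          · exact absurd h' (mul_ne_zero hm0 hx0)
          · rcases mul_eq_zero.mp h' with h'' | h''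
            · exact absurd h'' hX
            · exact h''
        refine ⟨1, 0, -(v 0) / m, by simp, by simp [div_ne_zero_iff, hX, hm0], ?_⟩
        funext i
        fin_cases i <;> simp [gammaTilde, hY, hZ, hU] <;> field_simp
    · have hZ : v 2 ≠ 0 := by
        intro hZ
        have hX : v 0 = 0 := by
          have h : v 0 * v 3 = 0 := by linear_combination e2 + m * v 1 * hZ
          rcases mul_eq_zero.mp h with h' | h'
          · exact h'
          · exact absurd h' hU
        have : (v 3) ^ 2 = 0 := by linear_combination -e1 + (v 2) * hZ + x₀ * v 3 * hX
        exact hU (pow_eq_zero_iff (n := 2) (by norm_num) |>.mp this)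
      refine ⟨v 2, v 3, 1 / (m * x₀ * v 2 * v 3), ?_, ?_, ?_⟩
      · simp [Prod.ext_iff, hZ]
      · simp [hm0, hx0, hZ, hU]
      · funext i
        fin_cases i
        · show v 0 = _
          simp only [gammaTilde, Pi.smul_apply, smul_eq_mul, Matrix.cons_val_zero, Fin.zero_eta]
          field_simp
          linear_combination e1
        · show v 1 = _
          simp only [gammaTilde, Pi.smul_apply, smul_eq_mul, Matrix.cons_val_one,
            Matrix.head_cons, Fin.mk_one, Matrix.cons_val_zero]
          field_simp
          linear_combination e1 - x₀ * e2
        · show v 2 = _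
          simp only [gammaTilde, Pi.smul_apply, smul_eq_mul]
          norm_num
          field_simp
        · show v 3 = _
          simp only [gammaTilde, Pi.smul_apply, smul_eq_mul]
          norm_num
          field_simp
  · rintro ⟨s, t, c, hst, hc, rfl⟩
    simp only [gammaTilde, Pi.smul_apply, smul_eq_mul, Matrix.cons_val_zero,
      Matrix.cons_val_one, Matrix.head_cons, Matrix.cons_val_two, Matrix.tail_cons,
      Matrix.cons_val_three]
    refine ⟨by ring, by ring, by ring⟩
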